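/- For any symplectic vector space W and a curve of Lagrangian subspaces given by the frame in the structural equation (with E_a' = E_b, E_b' = E_c, E_c' = F_c and the F-equations with curvature matrices R_t(·,·)), the span Λ(t) = span{E_a(t), E_b(t), E_c(t)} is Lagrangian at every time t provided it is Lagrangian at t = 0 and the frame is a Darboux frame (σ(E_i, E_j) = σ(F_i, F_j) = 0, σ(F_i, E_j) = δ_{ij}) at t = 0: the Darboux relations are preserved under the flow of the structural equation when R_t(c,c) is symmetric. -/

import Mathlib

open scoped BigOperators

/-- The Darboux-frame relations for the moving frame
`(E_a, E_b, E_c, F_a, F_b, F_c)` with respect to a symplectic form `σ`: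
the `E`'s span an isotropic subspace, the `F`'s span an isotropic subspace, and
`σ(F_i, E_j) = δ_{ij}`. -/
def IsDarbouxFrame {W : Type*} [AddCommGroup W] [Module ℝ W] {m : ℕ}
    (σ : LinearMap.BilinForm ℝ W)
    (Ea Eb Fa Fb : W) (Ec Fc : Fin m → W) : Prop :=
  σ Ea Eb = 0 ∧ (∀ i, σ Ea (Ec i) = 0) ∧ (∀ i, σ Eb (Ec i) = 0) ∧
    (∀ i j, σ (Ec i) (Ec j) = 0) ∧
  σ Fa Fb = 0 ∧ (∀ i, σ Fa (Fc i) = 0) ∧ (∀ i, σ Fb (Fc i) = 0) ∧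
    (∀ i j, σ (Fc i) (Fc j) = 0) ∧
  σ Fa Ea = 1 ∧ σ Fa Eb = 0 ∧ (∀ i, σ Fa (Ec i) = 0) ∧
  σ Fb Ea = 0 ∧ σ Fb Eb = 1 ∧ (∀ i, σ Fb (Ec i) = 0) ∧
  (∀ i, σ (Fc i) Ea = 0) ∧ (∀ i, σ (Fc i) Eb = 0) ∧
  (∀ i j, σ (Fc i) (Ec j) = if i = j then 1 else 0)

open Matrix

private lemma wronskian_const' {m : ℕ}
    (Raa Rbb : ℝ → ℝ) (Rac Rbc : ℝ → Fin m → ℝ)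
    (Rcc : ℝ → Matrix (Fin m) (Fin m) ℝ)
    (hS : ∀ t, (Rcc t).IsSymm)
    (xa xb ya yb ua ub va vb : ℝ → ℝ) (xc yc uc vc : ℝ → Fin m → ℝ)
    (hxa : ∀ t, HasDerivAt xa (xb t) t)
    (hxb : ∀ t, HasDerivAt xb (yb t) t)
    (hxc : ∀ i t, HasDerivAt (fun s => xc s i) (yc t i) t)
    (hya : ∀ t, HasDerivAt ya (-(Raa t * xa t) - ∑ i, Rac t i * xc t i) t)
    (hyb : ∀ t, HasDerivAt yb (-ya t - Rbb t * xb t - ∑ i, Rbc t i * xc t i) t)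
    (hyc : ∀ j t, HasDerivAt (fun s => yc s j)
      (-(Rac t j * xa t) - Rbc t j * xb t - ∑ i, Rcc t i j * xc t i) t)
    (hua : ∀ t, HasDerivAt ua (ub t) t)
    (hub : ∀ t, HasDerivAt ub (vb t) t)
    (huc : ∀ i t, HasDerivAt (fun s => uc s i) (vc t i) t)
    (hva : ∀ t, HasDerivAt va (-(Raa t * ua t) - ∑ i, Rac t i * uc t i) t)
    (hvb : ∀ t, HasDerivAt vb (-va t - Rbb t * ub t - ∑ i, Rbc t i * uc t i) t)
    (hvc : ∀ j t, HasDerivAt (fun s => vc s j)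
      (-(Rac t j * ua t) - Rbc t j * ub t - ∑ i, Rcc t i j * uc t i) t) :
    ∀ t : ℝ,
      (ya t * ua t + yb t * ub t + ∑ i, yc t i * uc t i)
        - (xa t * va t + xb t * vb t + ∑ i, xc t i * vc t i)
      = (ya 0 * ua 0 + yb 0 * ub 0 + ∑ i, yc 0 i * uc 0 i)
        - (xa 0 * va 0 + xb 0 * vb 0 + ∑ i, xc 0 i * vc 0 i) := by
  have key : ∀ t, HasDerivAt (fun s : ℝ =>
      (ya s * ua s + yb s * ub s + ∑ i, yc s i * uc s i)
        - (xa s * va s + xb s * vb s + ∑ i, xc s i * vc s i)) 0 t := by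
    intro t
    have h1 : HasDerivAt (fun s => ya s * ua s + yb s * ub s + ∑ i, yc s i * uc s i)
        (((-(Raa t * xa t) - ∑ i, Rac t i * xc t i) * ua t + ya t * ub t)
          + ((-ya t - Rbb t * xb t - ∑ i, Rbc t i * xc t i) * ub t + yb t * vb t)
          + ∑ j, ((-(Rac t j * xa t) - Rbc t j * xb t - ∑ i, Rcc t i j * xc t i) * uc t j
              + yc t j * vc t j)) t :=
      (((hya t).mul (hua t)).add ((hyb t).mul (hub t))).add
        (HasDerivAt.fun_sum fun j _ => (hyc j t).mul (huc j t))
    have h2 : HasDerivAt (fun s => xa s * va s + xb s * vb s + ∑ i, xc s i * vc s i)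
        ((xb t * va t + xa t * (-(Raa t * ua t) - ∑ i, Rac t i * uc t i))
          + (yb t * vb t + xb t * (-va t - Rbb t * ub t - ∑ i, Rbc t i * uc t i))
          + ∑ j, (yc t j * vc t j
              + xc t j * (-(Rac t j * ua t) - Rbc t j * ub t - ∑ i, Rcc t i j * uc t i))) t :=
      (((hxa t).mul (hva t)).add ((hxb t).mul (hvb t))).add
        (HasDerivAt.fun_sum fun j _ => (hxc j t).mul (hvc j t))
    have hD := h1.sub h2
    convert hD using 1
    case e'_4 => rfl
    case e'_5 => rfl
    case e'_8 => rfl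
    rw [eq_comm, sub_eq_zero]
    have hcc : ∑ j, ∑ i, (Rcc t i j * xc t i) * uc t j
        = ∑ j, ∑ i, xc t j * (Rcc t i j * uc t i) := by
      rw [Finset.sum_comm]
      refine Finset.sum_congr rfl fun i _ => Finset.sum_congr rfl fun j _ => ?_
      rw [Matrix.IsSymm.apply (hS t) i j]; ring
    simp only [sub_mul, neg_mul, mul_sub, mul_neg, Finset.sum_add_distrib,
      Finset.sum_sub_distrib, Finset.sum_mul, Finset.mul_sum, Finset.sum_neg_distrib]
    have e1 : ∑ i, Rac t i * xc t i * ua t = ∑ i, xc t i * (Rac t i * ua t) :=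
      Finset.sum_congr rfl fun i _ => by ring
    have e2 : ∑ i, Rbc t i * xc t i * ub t = ∑ i, xc t i * (Rbc t i * ub t) :=
      Finset.sum_congr rfl fun i _ => by ring
    have e3 : ∑ i, Rac t i * xa t * uc t i = ∑ i, xa t * (Rac t i * uc t i) :=
      Finset.sum_congr rfl fun i _ => by ring
    have e4 : ∑ i, Rbc t i * xb t * uc t i = ∑ i, xb t * (Rbc t i * uc t i) :=
      Finset.sum_congr rfl fun i _ => by ring
    have hcc' : ∑ j, ∑ i, Rcc t i j * xc t i * uc t j
        = ∑ j, ∑ i, xc t j * (Rcc t i j * uc t i) := by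
      simpa [mul_assoc] using hcc
    rw [e1, e2, e3, e4, hcc']
    ring
  intro t
  exact is_const_of_deriv_eq_zero
    (fun s => (key s).differentiableAt) (fun s => (key s).deriv) t 0

private lemma tripleJrow {κ : Type*} [Fintype κ] [DecidableEq κ]
    (P Q : Matrix (κ ⊕ κ) (κ ⊕ κ) ℝ) (u v : κ ⊕ κ) :
    ((P * Matrix.fromBlocks 0 (-1) 1 0 * Qᵀ : Matrix (κ ⊕ κ) (κ ⊕ κ) ℝ)) u v
      = (∑ p, P u (Sum.inr p) * Q v (Sum.inl p))
        - ∑ p, P u (Sum.inl p) * Q v (Sum.inr p) := by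
  simp only [Matrix.mul_apply, Matrix.transpose_apply, Fintype.sum_sum_type,
    Matrix.fromBlocks_apply₁₁, Matrix.fromBlocks_apply₁₂,
    Matrix.fromBlocks_apply₂₁, Matrix.fromBlocks_apply₂₂,
    Matrix.zero_apply, Matrix.neg_apply, Matrix.one_apply,
    mul_zero, zero_mul, mul_ite, mul_one, mul_neg, ite_mul, neg_mul,
    Finset.sum_ite_eq, Finset.sum_ite_eq', Finset.mem_univ, if_true,
    Finset.sum_add_distrib, Finset.sum_neg_distrib, zero_add, add_zero,
    Finset.sum_sub_distrib, Finset.sum_const_zero]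
  ring

private lemma tripleJcol {κ : Type*} [Fintype κ] [DecidableEq κ]
    (P Q : Matrix (κ ⊕ κ) (κ ⊕ κ) ℝ) (u v : κ ⊕ κ) :
    ((Pᵀ * Matrix.fromBlocks 0 (-1) 1 0 * Q : Matrix (κ ⊕ κ) (κ ⊕ κ) ℝ)) u v
      = (∑ p, P (Sum.inr p) u * Q (Sum.inl p) v)
        - ∑ p, P (Sum.inl p) u * Q (Sum.inr p) v := by
  simp only [Matrix.mul_apply, Matrix.transpose_apply, Fintype.sum_sum_type,
    Matrix.fromBlocks_apply₁₁, Matrix.fromBlocks_apply₁₂,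
    Matrix.fromBlocks_apply₂₁, Matrix.fromBlocks_apply₂₂,
    Matrix.zero_apply, Matrix.neg_apply, Matrix.one_apply,
    mul_zero, zero_mul, mul_ite, mul_one, mul_neg, ite_mul, neg_mul,
    Finset.sum_ite_eq, Finset.sum_ite_eq', Finset.mem_univ, if_true,
    Finset.sum_add_distrib, Finset.sum_neg_distrib, zero_add, add_zero,
    Finset.sum_sub_distrib, Finset.sum_const_zero]
  ring

private lemma pairing_const' {W : Type*} [NormedAddCommGroup W]
    [NormedSpace ℝ W] [FiniteDimensional ℝ W] {m : ℕ}
    (Ea Eb Fa Fb : ℝ → W) (Ec Fc : ℝ → Fin m → W)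
    (Raa Rbb : ℝ → ℝ) (Rac Rbc : ℝ → Fin m → ℝ)
    (Rcc : ℝ → Matrix (Fin m) (Fin m) ℝ)
    (hRccSymm : ∀ t, (Rcc t).IsSymm)
    (hEa : ∀ t, HasDerivAt Ea (Eb t) t)
    (hEb : ∀ t, HasDerivAt Eb (Fb t) t)
    (hEc : ∀ i, ∀ t, HasDerivAt (fun s => Ec s i) (Fc t i) t)
    (hFa : ∀ t, HasDerivAt Fa
      (-(Raa t • Ea t) - ∑ i, Rac t i • Ec t i) t)
    (hFb : ∀ t, HasDerivAt Fb
      (-Fa t - Rbb t • Eb t - ∑ i, Rbc t i • Ec t i) t)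
    (hFc : ∀ j, ∀ t, HasDerivAt (fun s => Fc s j)
      (-(Rac t j • Ea t) - Rbc t j • Eb t - ∑ i, Rcc t i j • Ec t i) t)
    (L M : W →ₗ[ℝ] ℝ) :
    ∀ t : ℝ,
      (L (Fa t) * M (Ea t) + L (Fb t) * M (Eb t) + ∑ i, L (Fc t i) * M (Ec t i))
        - (L (Ea t) * M (Fa t) + L (Eb t) * M (Fb t) + ∑ i, L (Ec t i) * M (Fc t i))
      = (L (Fa 0) * M (Ea 0) + L (Fb 0) * M (Eb 0) + ∑ i, L (Fc 0 i) * M (Ec 0 i))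
        - (L (Ea 0) * M (Fa 0) + L (Eb 0) * M (Fb 0) + ∑ i, L (Ec 0 i) * M (Fc 0 i)) := by
  have comp : ∀ (N : W →ₗ[ℝ] ℝ) (f : ℝ → W) (d : W) (t : ℝ), HasDerivAt f d t →
      HasDerivAt (fun s => N (f s)) (N d) t := by
    intro N f d t h
    have := (LinearMap.toContinuousLinearMap N).hasFDerivAt.comp_hasDerivAt t h
    exact this
  exact wronskian_const' Raa Rbb Rac Rbc Rcc hRccSymm
    (fun s => L (Ea s)) (fun s => L (Eb s)) (fun s => L (Fa s)) (fun s => L (Fb s))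
    (fun s => M (Ea s)) (fun s => M (Eb s)) (fun s => M (Fa s)) (fun s => M (Fb s))
    (fun s i => L (Ec s i)) (fun s i => L (Fc s i))
    (fun s i => M (Ec s i)) (fun s i => M (Fc s i))
    (fun t => comp L Ea (Eb t) t (hEa t))
    (fun t => comp L Eb (Fb t) t (hEb t))
    (fun i t => comp L (fun s => Ec s i) (Fc t i) t (hEc i t))
    (fun t => by
      have := comp L Fa _ t (hFa t)
      simpa only [map_sub, map_neg, _root_.map_smul, map_sum, smul_eq_mul] using this)
    (fun t => by
      have := comp L Fb _ t (hFb t)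
      simpa only [map_sub, map_neg, _root_.map_smul, map_sum, smul_eq_mul] using this)
    (fun j t => by
      have := comp L (fun s => Fc s j) _ t (hFc j t)
      simpa only [map_sub, map_neg, _root_.map_smul, map_sum, smul_eq_mul] using this)
    (fun t => comp M Ea (Eb t) t (hEa t))
    (fun t => comp M Eb (Fb t) t (hEb t))
    (fun i t => comp M (fun s => Ec s i) (Fc t i) t (hEc i t))
    (fun t => by
      have := comp M Fa _ t (hFa t)
      simpa only [map_sub, map_neg, _root_.map_smul, map_sum, smul_eq_mul] using this)
    (fun t => by
      have := comp M Fb _ t (hFb t)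
      simpa only [map_sub, map_neg, _root_.map_smul, map_sum, smul_eq_mul] using this)
    (fun j t => by
      have := comp M (fun s => Fc s j) _ t (hFc j t)
      simpa only [map_sub, map_neg, _root_.map_smul, map_sum, smul_eq_mul] using this)
set_option maxHeartbeats 1600000 in
private theorem gram_const {W : Type*} [NormedAddCommGroup W]
    [NormedSpace ℝ W] [FiniteDimensional ℝ W] {m : ℕ}
    (σ : LinearMap.BilinForm ℝ W)
    (hσ_alt : ∀ v w : W, σ v w = -σ w v)
    (Ea Eb Fa Fb : ℝ → W) (Ec Fc : ℝ → Fin m → W)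
    (Raa Rbb : ℝ → ℝ) (Rac Rbc : ℝ → Fin m → ℝ)
    (Rcc : ℝ → Matrix (Fin m) (Fin m) ℝ)
    (hRccSymm : ∀ t, (Rcc t).IsSymm)
    (hEa : ∀ t, HasDerivAt Ea (Eb t) t)
    (hEb : ∀ t, HasDerivAt Eb (Fb t) t)
    (hEc : ∀ i, ∀ t, HasDerivAt (fun s => Ec s i) (Fc t i) t)
    (hFa : ∀ t, HasDerivAt Fa
      (-(Raa t • Ea t) - ∑ i, Rac t i • Ec t i) t)
    (hFb : ∀ t, HasDerivAt Fb
      (-Fa t - Rbb t • Eb t - ∑ i, Rbc t i • Ec t i) t)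
    (hFc : ∀ j, ∀ t, HasDerivAt (fun s => Fc s j)
      (-(Rac t j • Ea t) - Rbc t j • Eb t - ∑ i, Rcc t i j • Ec t i) t)
    (h0 : IsDarbouxFrame σ (Ea 0) (Eb 0) (Fa 0) (Fb 0) (Ec 0) (Fc 0)) :
    ∀ (t : ℝ) (u v : (Fin 2 ⊕ Fin m) ⊕ (Fin 2 ⊕ Fin m)),
      σ (Sum.elim (Sum.elim ![Ea t, Eb t] (Ec t)) (Sum.elim ![Fa t, Fb t] (Fc t)) u)
        (Sum.elim (Sum.elim ![Ea t, Eb t] (Ec t)) (Sum.elim ![Fa t, Fb t] (Fc t)) v)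
      = (Matrix.fromBlocks 0 (-1) 1 0 :
          Matrix ((Fin 2 ⊕ Fin m) ⊕ (Fin 2 ⊕ Fin m)) ((Fin 2 ⊕ Fin m) ⊕ (Fin 2 ⊕ Fin m)) ℝ) u v := by
  classical
  obtain ⟨d1, d2, d3, d4, d5, d6, d7, d8, d9, d10, d11, d12, d13, d14, d15, d16, d17⟩ := h0
  have hself : ∀ w : W, σ w w = 0 := fun w => by have := hσ_alt w w; linarith
  set V : ℝ → (Fin 2 ⊕ Fin m) ⊕ (Fin 2 ⊕ Fin m) → W := fun t =>
    Sum.elim (Sum.elim ![Ea t, Eb t] (Ec t)) (Sum.elim ![Fa t, Fb t] (Fc t)) with hV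
  set J : Matrix ((Fin 2 ⊕ Fin m) ⊕ (Fin 2 ⊕ Fin m)) ((Fin 2 ⊕ Fin m) ⊕ (Fin 2 ⊕ Fin m)) ℝ :=
    Matrix.fromBlocks 0 (-1) 1 0 with hJ
  set G : ℝ → Matrix ((Fin 2 ⊕ Fin m) ⊕ (Fin 2 ⊕ Fin m)) ((Fin 2 ⊕ Fin m) ⊕ (Fin 2 ⊕ Fin m)) ℝ :=
    fun t => Matrix.of fun u v => σ (V t u) (V t v) with hG
  set K : ℝ → Matrix ((Fin 2 ⊕ Fin m) ⊕ (Fin 2 ⊕ Fin m)) ((Fin 2 ⊕ Fin m) ⊕ (Fin 2 ⊕ Fin m)) ℝ :=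
    fun t => Matrix.of fun u v => σ (V 0 u) (V t v) with hK
  -- initial Gram matrix
  have hG0 : G 0 = J := by
    have r1 : σ (Eb 0) (Ea 0) = 0 := by rw [hσ_alt, d1, neg_zero]
    have r2 : ∀ i, σ (Ec 0 i) (Ea 0) = 0 := fun i => by rw [hσ_alt, d2, neg_zero]
    have r3 : ∀ i, σ (Ec 0 i) (Eb 0) = 0 := fun i => by rw [hσ_alt, d3, neg_zero]
    have r5 : σ (Fb 0) (Fa 0) = 0 := by rw [hσ_alt, d5, neg_zero]
    have r6 : ∀ i, σ (Fc 0 i) (Fa 0) = 0 := fun i => by rw [hσ_alt, d6, neg_zero]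
    have r7 : ∀ i, σ (Fc 0 i) (Fb 0) = 0 := fun i => by rw [hσ_alt, d7, neg_zero]
    have r9 : σ (Ea 0) (Fa 0) = -1 := by rw [hσ_alt, d9]
    have r10 : σ (Eb 0) (Fa 0) = 0 := by rw [hσ_alt, d10, neg_zero]
    have r11 : ∀ i, σ (Ec 0 i) (Fa 0) = 0 := fun i => by rw [hσ_alt, d11, neg_zero]
    have r12 : σ (Ea 0) (Fb 0) = 0 := by rw [hσ_alt, d12, neg_zero]
    have r13 : σ (Eb 0) (Fb 0) = -1 := by rw [hσ_alt, d13]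
    have r14 : ∀ i, σ (Ec 0 i) (Fb 0) = 0 := fun i => by rw [hσ_alt, d14, neg_zero]
    have r15 : ∀ i, σ (Ea 0) (Fc 0 i) = 0 := fun i => by rw [hσ_alt, d15, neg_zero]
    have r16 : ∀ i, σ (Eb 0) (Fc 0 i) = 0 := fun i => by rw [hσ_alt, d16, neg_zero]
    have r17 : ∀ i j, σ (Ec 0 i) (Fc 0 j) = -if j = i then 1 else 0 := fun i j => by
      rw [hσ_alt, d17]
    ext u v
    rcases u with (p | i) | (p | i) <;> rcases v with (q | j) | (q | j) <;>
      simp only [hG, hV, hJ, Matrix.of_apply, Sum.elim_inl, Sum.elim_inr,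
        Matrix.fromBlocks_apply₁₁, Matrix.fromBlocks_apply₁₂,
        Matrix.fromBlocks_apply₂₁, Matrix.fromBlocks_apply₂₂,
        Matrix.zero_apply, Matrix.neg_apply, Matrix.one_apply] <;>
      first
        | (fin_cases p <;> fin_cases q <;>
            simp [hself, d1, d5, d9, d10, d12, d13, r1, r5, r9, r10, r12, r13])
        | (fin_cases p <;>
            simp [d2, d3, d6, d7, d11, d14, d15, d16, r15, r16, r2, r3, r6, r7, r11, r14])
        | (fin_cases q <;>
            simp [d2, d3, d6, d7, d11, d14, d15, d16, r15, r16, r2, r3, r6, r7, r11, r14])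
        | simp [d4, d8, d17, r17, hself, Sum.inr.injEq, eq_comm]
  have hJJ : J * J = -1 := by
    rw [hJ, Matrix.fromBlocks_multiply]
    have h2 : (Matrix.fromBlocks (-1) 0 0 (-1) :
        Matrix ((Fin 2 ⊕ Fin m) ⊕ (Fin 2 ⊕ Fin m)) ((Fin 2 ⊕ Fin m) ⊕ (Fin 2 ⊕ Fin m)) ℝ)
        = -(Matrix.fromBlocks 1 0 0 1) := by
      rw [Matrix.fromBlocks_neg]; norm_num
    simp [h2, Matrix.fromBlocks_one]
  have hJT : Jᵀ = -J := by
    rw [hJ, Matrix.fromBlocks_transpose, Matrix.fromBlocks_neg]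
    simp [Matrix.transpose_zero, Matrix.transpose_one, Matrix.transpose_neg]
  have hK0 : K 0 = G 0 := by ext u v; rfl
  have hKJK : ∀ t, K t * J * (K t)ᵀ = J := by
    have hconst : ∀ t, K t * J * (K t)ᵀ = K 0 * J * (K 0)ᵀ := by
      intro t
      ext u v
      rw [hJ, tripleJrow, tripleJrow]
      simp only [hK, Matrix.of_apply, hV, Sum.elim_inl, Sum.elim_inr,
        Fintype.sum_sum_type, Fin.sum_univ_two, Matrix.cons_val_zero,
        Matrix.cons_val_one, Matrix.head_cons]
      exact pairing_const' Ea Eb Fa Fb Ec Fc Raa Rbb Rac Rbc Rcc hRccSymm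
        hEa hEb hEc hFa hFb hFc (σ (V 0 u)) (σ (V 0 v)) t
    intro t
    rw [hconst t, hK0, hG0, hJT, mul_neg, hJJ]
    simp
  have hKJK2 : ∀ t, (K t)ᵀ * J * K t = J := by
    intro t
    have h1 : K t * (J * (K t)ᵀ * -J) = 1 := by
      have e : K t * (J * (K t)ᵀ * -J) = (K t * J * (K t)ᵀ) * -J := by noncomm_ring
      rw [e, hKJK t, mul_neg, hJJ, neg_neg]
    have h2 : (J * (K t)ᵀ * -J) * K t = 1 := mul_eq_one_comm.mp h1
    have h3 : (-J) * ((J * (K t)ᵀ * -J) * K t) = -J := by rw [h2, mul_one]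
    have h4 : (-J) * ((J * (K t)ᵀ * -J) * K t) = ((-J) * J) * ((K t)ᵀ * -J * K t) := by
      noncomm_ring
    have h5 : (-J) * J = 1 := by rw [neg_mul, hJJ, neg_neg]
    rw [h4, h5, one_mul] at h3
    have h7 : -((K t)ᵀ * J * K t) = -J := by rw [← h3]; noncomm_ring
    exact neg_inj.mp h7
  have hGJG : ∀ t, (G t)ᵀ * J * G t = J := by
    intro tb
    set Kb : ℝ → Matrix ((Fin 2 ⊕ Fin m) ⊕ (Fin 2 ⊕ Fin m)) ((Fin 2 ⊕ Fin m) ⊕ (Fin 2 ⊕ Fin m)) ℝ :=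
      fun s => Matrix.of fun u v => σ (V s u) (V tb v) with hKb
    have hconst : ∀ s, (Kb s)ᵀ * J * Kb s = (Kb 0)ᵀ * J * Kb 0 := by
      intro s
      ext u v
      rw [hJ, tripleJcol, tripleJcol]
      simp only [hKb, Matrix.of_apply, hV, Sum.elim_inl, Sum.elim_inr,
        Fintype.sum_sum_type, Fin.sum_univ_two, Matrix.cons_val_zero,
        Matrix.cons_val_one, Matrix.head_cons]
      have := pairing_const' Ea Eb Fa Fb Ec Fc Raa Rbb Rac Rbc Rcc hRccSymm
        hEa hEb hEc hFa hFb hFc (σ.flip (V tb u)) (σ.flip (V tb v)) s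
      exact this
    have e1 : Kb tb = G tb := by ext u v; rfl
    have e2 : Kb 0 = K tb := by ext u v; rfl
    have h := hconst tb
    rw [e1, e2] at h
    rw [h, hKJK2 tb]
  have hGfin : ∀ t, G t = J := by
    have hGT : ∀ t, (G t)ᵀ = -(G t) := by
      intro t; ext u v
      simp only [Matrix.transpose_apply, Matrix.neg_apply, hG, Matrix.of_apply]
      exact hσ_alt _ _
    have hGJG2 : ∀ t, G t * J * G t = -J := by
      intro t
      have h := hGJG t
      rw [hGT t] at h
      have e : (-(G t)) * J * G t = -(G t * J * G t) := by noncomm_ring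
      rw [e] at h
      exact neg_eq_iff_eq_neg.mp h
    have hXX : ∀ t, (J * G t) * (J * G t) = 1 := by
      intro t
      have e : (J * G t) * (J * G t) = J * (G t * J * G t) := by noncomm_ring
      rw [e, hGJG2 t, mul_neg, hJJ, neg_neg]
    set B : ℝ → Matrix ((Fin 2 ⊕ Fin m) ⊕ (Fin 2 ⊕ Fin m)) ((Fin 2 ⊕ Fin m) ⊕ (Fin 2 ⊕ Fin m)) ℝ :=
      fun t => J * G t + 1 with hB
    have hBB : ∀ t, B t * B t = B t + B t := by
      intro t
      calc B t * B t = (J * G t) * (J * G t) + J * G t + J * G t + 1 := by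
            simp only [hB]; noncomm_ring
        _ = 1 + J * G t + J * G t + 1 := by rw [hXX t]
        _ = B t + B t := by simp only [hB]; abel
    have hVc : ∀ u, Continuous fun t => V t u := by
      intro u
      have cEa : Continuous Ea := continuous_iff_continuousAt.2 fun t => (hEa t).continuousAt
      have cEb : Continuous Eb := continuous_iff_continuousAt.2 fun t => (hEb t).continuousAt
      have cFa : Continuous Fa := continuous_iff_continuousAt.2 fun t => (hFa t).continuousAt
      have cFb : Continuous Fb := continuous_iff_continuousAt.2 fun t => (hFb t).continuousAt
      have cEc : ∀ i, Continuous fun t => Ec t i :=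
        fun i => continuous_iff_continuousAt.2 fun t => (hEc i t).continuousAt
      have cFc : ∀ i, Continuous fun t => Fc t i :=
        fun i => continuous_iff_continuousAt.2 fun t => (hFc i t).continuousAt
      rcases u with (p | i) | (p | i)
      · fin_cases p
        · simpa [hV] using cEa
        · simpa [hV] using cEb
      · simpa [hV] using cEc i
      · fin_cases p
        · simpa [hV] using cFa
        · simpa [hV] using cFb
      · simpa [hV] using cFc i
    have hσc : ∀ u v, Continuous fun t => σ (V t u) (V t v) := by
      intro u v
      let σ₁ : W →ₗ[ℝ] (W →L[ℝ] ℝ) :=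
        { toFun := fun x => LinearMap.toContinuousLinearMap (σ x)
          map_add' := fun x y => by ext w; simp
          map_smul' := fun c x => by ext w; simp }
      have hc : Continuous fun x : W => σ₁ x := σ₁.continuous_of_finiteDimensional
      have h2 := Continuous.clm_apply (hc.comp (hVc u)) (hVc v)
      simpa [σ₁] using h2
    have hBc : ∀ u v, Continuous fun t => B t u v := by
      intro u v
      have e : (fun t => B t u v)
          = fun t => (∑ w, J u w * σ (V t w) (V t v)) + (1 : Matrix ((Fin 2 ⊕ Fin m) ⊕ (Fin 2 ⊕ Fin m)) ((Fin 2 ⊕ Fin m) ⊕ (Fin 2 ⊕ Fin m)) ℝ) u v := by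
        funext t
        simp only [hB]
        simp [Matrix.add_apply, Matrix.mul_apply, hG, Matrix.of_apply]
      rw [e]
      exact (continuous_finset_sum _ fun w _ => continuous_const.mul (hσc w v)).add
        continuous_const
    set f : ℝ → ℝ := fun t => ∑ u, ∑ v, |B t u v| with hf
    have hfc : Continuous f := by
      rw [hf]
      exact continuous_finset_sum _ fun u _ =>
        continuous_finset_sum _ fun v _ => (hBc u v).abs
    have hB0 : B 0 = 0 := by
      rw [hB]
      simp only [hG0, hJJ]
      exact neg_add_cancel 1
    have hf0 : f 0 = 0 := by simp only [hf, hB0, Matrix.zero_apply, abs_zero,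
      Finset.sum_const_zero]
    have hfnn : ∀ t, 0 ≤ f t := fun t =>
      Finset.sum_nonneg fun u _ => Finset.sum_nonneg fun v _ => abs_nonneg _
    have hineq : ∀ t, f t + f t ≤ f t * f t := by
      intro t
      have habs : ∀ u v, |(B t * B t) u v| ≤ ∑ w, |B t u w| * |B t w v| := by
        intro u v
        rw [Matrix.mul_apply]
        refine (Finset.abs_sum_le_sum_abs _ _).trans (le_of_eq ?_)
        exact Finset.sum_congr rfl fun w _ => abs_mul _ _
      have h1 : f t + f t = ∑ u, ∑ v, |(B t * B t) u v| := by
        simp only [hf]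
        rw [← Finset.sum_add_distrib]
        refine Finset.sum_congr rfl fun u _ => ?_
        rw [← Finset.sum_add_distrib]
        refine Finset.sum_congr rfl fun v _ => ?_
        rw [hBB t, Matrix.add_apply, ← two_mul (B t u v), abs_mul, abs_two, two_mul]
      have h3 : ∑ u, ∑ v, ∑ w, |B t u w| * |B t w v| ≤ f t * f t := by
        have e : ∀ u : (Fin 2 ⊕ Fin m) ⊕ (Fin 2 ⊕ Fin m),
            ∑ v, ∑ w, |B t u w| * |B t w v| = ∑ w, |B t u w| * ∑ v, |B t w v| := by
          intro u
          rw [Finset.sum_comm]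
          exact Finset.sum_congr rfl fun w _ => (Finset.mul_sum _ _ _).symm
        calc ∑ u, ∑ v, ∑ w, |B t u w| * |B t w v|
            = ∑ u, ∑ w, |B t u w| * ∑ v, |B t w v| :=
              Finset.sum_congr rfl fun u _ => e u
          _ ≤ ∑ u, ∑ w, |B t u w| * f t := by
              refine Finset.sum_le_sum fun u _ => Finset.sum_le_sum fun w _ => ?_
              refine mul_le_mul_of_nonneg_left ?_ (abs_nonneg _)
              simp only [hf]
              exact Finset.single_le_sum
                (f := fun w' => ∑ v, |B t w' v|)
                (fun w' _ => Finset.sum_nonneg fun v _ => abs_nonneg _)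
                (Finset.mem_univ w)
          _ = f t * f t := by
              simp only [hf]
              simp only [← Finset.sum_mul]
      calc f t + f t = ∑ u, ∑ v, |(B t * B t) u v| := h1
        _ ≤ ∑ u, ∑ v, ∑ w, |B t u w| * |B t w v| :=
            Finset.sum_le_sum fun u _ => Finset.sum_le_sum fun v _ => habs u v
        _ ≤ f t * f t := h3
    have hfzero : ∀ t, f t = 0 := by
      by_contra hcon
      push_neg at hcon
      obtain ⟨t0, ht0⟩ := hcon
      have hpos : 0 < f t0 := lt_of_le_of_ne (hfnn t0) (Ne.symm ht0)
      have h2 : 2 ≤ f t0 := by nlinarith [hineq t0]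
      have hmem : (1 : ℝ) ∈ Set.uIcc (f 0) (f t0) := by
        rw [hf0]
        exact Set.mem_uIcc.2 (Or.inl ⟨by norm_num, by linarith⟩)
      obtain ⟨s, -, hs⟩ := intermediate_value_uIcc hfc.continuousOn hmem
      have h4 := hineq s
      rw [hs] at h4
      linarith
    intro t
    have hBt : B t = 0 := by
      ext u v
      have h := hfzero t
      simp only [hf] at h
      have h1 := (Finset.sum_eq_zero_iff_of_nonneg
        (fun u _ => Finset.sum_nonneg fun v _ => abs_nonneg _)).mp h u (Finset.mem_univ u)
      have h2 := (Finset.sum_eq_zero_iff_of_nonneg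
        (fun v _ => abs_nonneg _)).mp h1 v (Finset.mem_univ v)
      simpa using abs_eq_zero.mp h2
    have hJG : J * G t = -1 := by
      have h := hBt
      rw [hB] at h
      exact eq_neg_of_add_eq_zero_left h
    calc G t = 1 * G t := (one_mul _).symm
      _ = (-(J * J)) * G t := by rw [hJJ, neg_neg]
      _ = -(J * (J * G t)) := by noncomm_ring
      _ = -(J * (-1)) := by rw [hJG]
      _ = J := by rw [mul_neg, mul_one, neg_neg]
  intro t u v
  have := congrFun (congrFun (hGfin t) u) v
  simpa [hG, hV, hJ] using this

/-- For a symplectic vector space `(W, σ)` and a moving frame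
`(E_a, E_b, E_c, F_a, F_b, F_c)` evolving by the structural equation (the
`E`-chain equations `E_a' = E_b`, `E_b' = F_b`, `E_c' = F_c`, as printed in the
paper with the typo `E_b' = E_c` for the tuple `E_c`, and the `F`-equations with
curvature data `R_t(a,a), R_t(a,c), R_t(b,b), R_t(b,c), R_t(c,c)`, the matrix
`R_t(c,c)` being symmetric), the Darboux-frame relations are preserved under the
flow: if the frame is a Darboux frame at `t = 0`, it is a Darboux frame for all
`t`; in particular `Λ(t) = span{E_a(t), E_b(t), E_c(t)}` stays Lagrangian. -/

theorem darboux_frame_preserved {W : Type*} [NormedAddCommGroup W]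
    [NormedSpace ℝ W] [FiniteDimensional ℝ W] {m : ℕ}
    (σ : LinearMap.BilinForm ℝ W)
    (hσ_alt : ∀ v w : W, σ v w = -σ w v)
    (hσ_nondeg : ∀ v : W, (∀ w : W, σ v w = 0) → v = 0)
    (Ea Eb Fa Fb : ℝ → W) (Ec Fc : ℝ → Fin m → W)
    (Raa Rbb : ℝ → ℝ) (Rac Rbc : ℝ → Fin m → ℝ)
    (Rcc : ℝ → Matrix (Fin m) (Fin m) ℝ)
    (hRccSymm : ∀ t, (Rcc t).IsSymm)
    (hEa : ∀ t, HasDerivAt Ea (Eb t) t)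
    (hEb : ∀ t, HasDerivAt Eb (Fb t) t)
    (hEc : ∀ i, ∀ t, HasDerivAt (fun s => Ec s i) (Fc t i) t)
    (hFa : ∀ t, HasDerivAt Fa
      (-(Raa t • Ea t) - ∑ i, Rac t i • Ec t i) t)
    (hFb : ∀ t, HasDerivAt Fb
      (-Fa t - Rbb t • Eb t - ∑ i, Rbc t i • Ec t i) t)
    (hFc : ∀ j, ∀ t, HasDerivAt (fun s => Fc s j)
      (-(Rac t j • Ea t) - Rbc t j • Eb t - ∑ i, Rcc t i j • Ec t i) t)
    (h0 : IsDarbouxFrame σ (Ea 0) (Eb 0) (Fa 0) (Fb 0) (Ec 0) (Fc 0)) :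
    ∀ t : ℝ, IsDarbouxFrame σ (Ea t) (Eb t) (Fa t) (Fb t) (Ec t) (Fc t) := by
  intro t
  have key := gram_const σ hσ_alt Ea Eb Fa Fb Ec Fc Raa Rbb Rac Rbc Rcc hRccSymm
    hEa hEb hEc hFa hFb hFc h0 t
  refine ⟨?_, ?_, ?_, ?_, ?_, ?_, ?_, ?_, ?_, ?_, ?_, ?_, ?_, ?_, ?_, ?_, ?_⟩
  · simpa using key (Sum.inl (Sum.inl 0)) (Sum.inl (Sum.inl 1))
  · intro i; simpa using key (Sum.inl (Sum.inl 0)) (Sum.inl (Sum.inr i))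
  · intro i; simpa using key (Sum.inl (Sum.inl 1)) (Sum.inl (Sum.inr i))
  · intro i j; simpa using key (Sum.inl (Sum.inr i)) (Sum.inl (Sum.inr j))
  · simpa using key (Sum.inr (Sum.inl 0)) (Sum.inr (Sum.inl 1))
  · intro i; simpa using key (Sum.inr (Sum.inl 0)) (Sum.inr (Sum.inr i))
  · intro i; simpa using key (Sum.inr (Sum.inl 1)) (Sum.inr (Sum.inr i))
  · intro i j; simpa using key (Sum.inr (Sum.inr i)) (Sum.inr (Sum.inr j))
  · simpa using key (Sum.inr (Sum.inl 0)) (Sum.inl (Sum.inl 0))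
  · simpa using key (Sum.inr (Sum.inl 0)) (Sum.inl (Sum.inl 1))
  · intro i; simpa using key (Sum.inr (Sum.inl 0)) (Sum.inl (Sum.inr i))
  · simpa using key (Sum.inr (Sum.inl 1)) (Sum.inl (Sum.inl 0))
  · simpa using key (Sum.inr (Sum.inl 1)) (Sum.inl (Sum.inl 1))
  · intro i; simpa using key (Sum.inr (Sum.inl 1)) (Sum.inl (Sum.inr i))
  · intro i; simpa using key (Sum.inr (Sum.inr i)) (Sum.inl (Sum.inl 0))
  · intro i; simpa using key (Sum.inr (Sum.inr i)) (Sum.inl (Sum.inl 1))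
  · intro i j
    have := key (Sum.inr (Sum.inr i)) (Sum.inl (Sum.inr j))
    simpa [Matrix.one_apply] using this
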